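/- For all nonnegative integers m, n and complex z₁, z₂, q: z₁ H_{m,n}(z₁, z₂ | q) = q^m (1 - q^n) H_{m,n-1}(z₁, z₂ | q) + H_{m+1,n}(z₁, z₂ | q), where the term with n-1 is interpreted as 0 when n = 0. -/
import Mathlib


open Finset Filter

noncomputable def qPoch (a q : ℂ) (n : ℕ) : ℂ :=
  ∏ j ∈ Finset.range n, (1 - a * q ^ j)

noncomputable def qbinom (q : ℂ) : ℕ → ℕ → ℂ
  | _, 0 => 1
  | 0, _ + 1 => 0
  | m + 1, k + 1 => qbinom q m k + q ^ (k + 1) * qbinom q m (k + 1)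

/-- The first q-analogue of the 2D Hermite polynomials. -/
noncomputable def H2D (q z1 z2 : ℂ) (m n : ℕ) : ℂ :=
  ∑ k ∈ Finset.range (min m n + 1),
    qbinom q m k * qbinom q n k * (-1) ^ k * q ^ (k.choose 2) * qPoch q q k *
      z1 ^ (m - k) * z2 ^ (n - k)

/-- The second q-analogue of the 2D Hermite polynomials. -/
noncomputable def h2D (q z1 z2 : ℂ) (m n : ℕ) : ℂ :=
  ∑ j ∈ Finset.range (min m n + 1),
    qbinom q m j * qbinom q n j * q ^ ((m - j) * (n - j)) * (-1) ^ j * qPoch q q j *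
      z1 ^ (m - j) * z2 ^ (n - j)

/-- The q-2D ultraspherical (q-disk / q-Zernike) polynomials. -/
noncomputable def p2D (q b z1 z2 : ℂ) (m n : ℕ) : ℂ :=
  ∑ k ∈ Finset.range (min m n + 1),
    qbinom q m k * qbinom q n k * (-1) ^ k * q ^ (k.choose 2) * qPoch q q k *
      qPoch (b * q) q (m + n - k) * z1 ^ (m - k) * z2 ^ (n - k)

/-- The infinite q-Pochhammer product (a;q)_∞. -/
noncomputable def qPochInf (a q : ℂ) : ℂ :=
  ∏' j : ℕ, (1 - a * q ^ j)

lemma qbinom_zero (q : ℂ) (m : ℕ) : qbinom q m 0 = 1 := by cases m <;> rfl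

lemma qbinom_zero' (q : ℂ) (k : ℕ) : qbinom q 0 (k+1) = 0 := rfl

lemma qbinom_succ (q : ℂ) (m k : ℕ) :
    qbinom q (m+1) (k+1) = qbinom q m k + q ^ (k + 1) * qbinom q m (k + 1) := rfl

lemma qbinom_eq_zero (q : ℂ) : ∀ m k : ℕ, m < k → qbinom q m k = 0
  | 0, _+1, _ => rfl
  | m+1, k+1, h => by
    have h1 : m < k := Nat.lt_of_succ_lt_succ h
    rw [qbinom_succ, qbinom_eq_zero q m k h1,
        qbinom_eq_zero q m (k+1) (h1.trans (Nat.lt_succ_self k))]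
    ring

lemma qbinom_pascal' (q : ℂ) : ∀ m k : ℕ,
    qbinom q (m+1) (k+1) = q ^ (m - k) * qbinom q m k + qbinom q m (k+1) := by
  intro m
  induction m with
  | zero =>
    intro k
    cases k with
    | zero => simp [qbinom_succ, qbinom_zero, qbinom_zero']
    | succ k => simp [qbinom_succ, qbinom_zero']
  | succ m ih =>
    intro k
    cases k with
    | zero =>
      have I1 := ih 0
      have R1 := qbinom_succ q (m+1) 0
      have R2 := qbinom_succ q m 0
      simp only [Nat.sub_zero, qbinom_zero] at I1 R1 R2 ⊢
      linear_combination R1 + q * I1 - R2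
    | succ k =>
      rcases lt_trichotomy k m with hlt | heq | hgt
      · obtain ⟨d, rfl⟩ : ∃ d, m = k + (d + 1) := ⟨m - k - 1, by omega⟩
        have I1 := ih k
        have I2 := ih (k+1)
        rw [show k + (d+1) - k = d + 1 from by omega] at I1
        rw [show k + (d+1) - (k+1) = d from by omega] at I2
        rw [show k + (d+1) + 1 - (k+1) = d + 1 from by omega]
        have R1 := qbinom_succ q (k+(d+1)+1) (k+1)
        have R2 := qbinom_succ q (k+(d+1)) k
        have R3 := qbinom_succ q (k+(d+1)) (k+1)
        linear_combination R1 + I1 - q^(d+1) * R2 + q^(k+2) * I2 - R3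
      · subst heq
        rw [show k + 1 - (k + 1) = 0 from by omega, qbinom_succ q (k+1) (k+1),
            qbinom_eq_zero q (k+1) (k+2) (by omega), qbinom_succ q k k]
        have hz : qbinom q k (k+1) = 0 := qbinom_eq_zero q k (k+1) (by omega)
        rw [hz]
        ring
      · rw [qbinom_eq_zero q (m+2) (k+2) (by omega),
            qbinom_eq_zero q (m+1) (k+1) (by omega),
            qbinom_eq_zero q (m+1) (k+2) (by omega)]
        ring

lemma qbinom_col (q : ℂ) : ∀ n k : ℕ,
    (1 - q ^ (k+1)) * qbinom q (n+1) (k+1) = (1 - q ^ (n+1)) * qbinom q n k := by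
  intro n
  induction n with
  | zero =>
    intro k
    cases k with
    | zero => simp [qbinom_succ, qbinom_zero, qbinom_zero']
    | succ k =>
      rw [qbinom_eq_zero q 1 (k+2) (by omega), qbinom_eq_zero q 0 (k+1) (by omega)]
      ring
  | succ n ih =>
    intro k
    cases k with
    | zero =>
      have p1 := qbinom_succ q (n+1) 0
      have h0 := ih 0
      simp only [qbinom_zero, pow_one] at p1 h0 ⊢
      linear_combination (1 - q) * p1 + q * h0
    | succ k =>
      have p1 := qbinom_succ q (n+1) (k+1)
      have p2 := qbinom_succ q n k
      have h1 := ih k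
      have h2 := ih (k+1)
      linear_combination (1 - q^(k+2)) * p1 + q * h1 + q^(k+2) * h2 - q*(1-q^(n+1)) * p2


lemma key (q : ℂ) (m n k : ℕ) (hk : k ≤ m) :
    qbinom q m (k+1) * qbinom q (n+1) (k+1) * (-1)^(k+1) * q^((k+1).choose 2) * qPoch q q (k+1)
    - qbinom q (m+1) (k+1) * qbinom q (n+1) (k+1) * (-1)^(k+1) * q^((k+1).choose 2) * qPoch q q (k+1)
    = q^m * (1 - q^(n+1)) * (qbinom q m k * qbinom q n k * (-1)^k * q^(k.choose 2) * qPoch q q k) := by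
  obtain ⟨d, rfl⟩ : ∃ d, m = k + d := ⟨m - k, by omega⟩
  have L1 := qbinom_pascal' q (k+d) k
  rw [show k + d - k = d from by omega] at L1
  have hA := qbinom_col q n k
  have hP : qPoch q q (k+1) = qPoch q q k * (1 - q * q^k) := Finset.prod_range_succ _ _
  have hC : (k+1).choose 2 = k.choose 2 + k := by
    rw [Nat.choose_succ_succ, Nat.choose_one_right, Nat.add_comm]
  rw [hP, hC]
  linear_combination (-(qbinom q (n+1) (k+1)) * ((-1)^(k+1) * q^(k.choose 2 + k)
      * (qPoch q q k * (1 - q*q^k)))) * L1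
    + (q^(d+k) * qbinom q (k+d) k * ((-1)^k * q^(k.choose 2) * qPoch q q k)) * hA

lemma H2D_eq_sum (q z1 z2 : ℂ) (m n N : ℕ) (h : min m n < N) :
    H2D q z1 z2 m n = ∑ k ∈ Finset.range N,
      qbinom q m k * qbinom q n k * (-1) ^ k * q ^ (k.choose 2) * qPoch q q k *
        z1 ^ (m - k) * z2 ^ (n - k) := by
  rw [H2D]
  apply Finset.sum_subset
  · exact Finset.range_subset_range.2 h
  · intro k _ hk
    rw [Finset.mem_range, not_lt] at hk
    have : m < k ∨ n < k := by omega
    rcases this with h' | h'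
    · rw [qbinom_eq_zero q m k h']; ring
    · rw [qbinom_eq_zero q n k h']; ring

lemma main_aux (q z1 z2 : ℂ) (m n' : ℕ) :
    ∑ k ∈ Finset.range (m+2),
      (z1 * (qbinom q m k * qbinom q (n'+1) k * (-1)^k * q^(k.choose 2) * qPoch q q k *
          z1^(m-k) * z2^(n'+1-k))
       - qbinom q (m+1) k * qbinom q (n'+1) k * (-1)^k * q^(k.choose 2) * qPoch q q k *
          z1^(m+1-k) * z2^(n'+1-k))
    = ∑ k ∈ Finset.range (m+2),
      q^m * (1 - q^(n'+1)) * (qbinom q m k * qbinom q n' k * (-1)^k * q^(k.choose 2) *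
        qPoch q q k * z1^(m-k) * z2^(n'-k)) := by
  rw [Finset.sum_range_succ' _ (m+1), Finset.sum_range_succ _ (m+1)]
  congr 1
  · apply Finset.sum_congr rfl
    intro k hk
    rw [Finset.mem_range] at hk
    rw [show n'+1-(k+1) = n'-k from by omega, show m+1-(k+1) = m-k from by omega]
    rcases Nat.lt_or_ge k m with hlt | hge
    · obtain ⟨d, rfl⟩ : ∃ d, m = k + (d+1) := ⟨m - k - 1, by omega⟩
      rw [show k+(d+1)-(k+1) = d from by omega, show k+(d+1)-k = d+1 from by omega]
      have hkey := key q (k+(d+1)) n' k (by omega)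
      linear_combination (z1^(d+1) * z2^(n'-k)) * hkey
    · have hkm : k = m := by omega
      subst hkm
      rw [show k - (k+1) = 0 from by omega, Nat.sub_self]
      have hz : qbinom q k (k+1) = 0 := qbinom_eq_zero q k (k+1) (by omega)
      have hkey := key q k n' k le_rfl
      linear_combination z2^(n'-k) * hkey +
        ((z1 - 1) * z2^(n'-k) * qbinom q (n'+1) (k+1) *
          ((-1)^(k+1) * q^((k+1).choose 2) * qPoch q q (k+1))) * hz
  · rw [qbinom_eq_zero q m (m+1) (by omega)]
    simp [qbinom_zero, qPoch]
    ring


theorem stmt4 (m n : ℕ) (z1 z2 q : ℂ) :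
    z1 * H2D q z1 z2 m n =
      q ^ m * (1 - q ^ n) * H2D q z1 z2 m (n - 1) + H2D q z1 z2 (m + 1) n := by
  cases n with
  | zero =>
    have h0 : ∀ M, H2D q z1 z2 M 0 = z1 ^ M := by
      intro M
      rw [H2D]
      simp [qbinom_zero, qPoch]
    rw [show (0:ℕ) - 1 = 0 from rfl, h0, h0]
    simp only [pow_zero, sub_self, mul_zero, zero_mul, zero_add, pow_succ]
    ring
  | succ n' =>
    rw [show n' + 1 - 1 = n' from rfl]
    rw [H2D_eq_sum q z1 z2 m (n'+1) (m+2) (by omega),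
        H2D_eq_sum q z1 z2 m n' (m+2) (by omega),
        H2D_eq_sum q z1 z2 (m+1) (n'+1) (m+2) (by omega),
        Finset.mul_sum, Finset.mul_sum, ← sub_eq_iff_eq_add, ← Finset.sum_sub_distrib]
    exact main_aux q z1 z2 m n'
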